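/- The binomial identity Σ over decompositions: for n ≥ 0 and m ≥ 1, Σ_{k=0}^{m} (−1)^k · C(n+k, k) · ((n+2k+1)/(n+k+m+1))·C(n+2m, m−k) = 0, while for m = 0 the sum equals 1. (This is the combinatorial content of YX = Id for the matrices of the previous statements.) -/

import Mathlib

open Finset Polynomial

/-- Upper negation: `Ring.choose (-(n+1)) k = (-1)^k * C(n+k, k)` over `ℤ`. -/
lemma ring_choose_neg (n k : ℕ) :
    Ring.choose (-(n + 1) : ℤ) k = (-1) ^ k * ((n + k).choose k : ℤ) := by
  refine nsmul_right_injective (Nat.factorial_ne_zero k) ?_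
  simp only
  rw [← Ring.descPochhammer_eq_factorial_smul_choose,
    descPochhammer_smeval_eq_ascPochhammer]
  have h1 : (-(n + 1) : ℤ) - k + 1 = -((n + k : ℕ) : ℤ) := by push_cast; ring
  rw [h1, ascPochhammer_smeval_neg_eq_descPochhammer,
    descPochhammer_smeval_eq_descFactorial,
    Nat.descFactorial_eq_factorial_mul_choose]
  rw [nsmul_eq_mul]
  rw [Units.smul_def, Int.coe_negOnePow_natCast, smul_eq_mul]
  push_cast
  ring

/-- Chu–Vandermonde with one negated upper index. -/
lemma vandermonde_neg (n N j : ℕ) (h : n + 1 ≤ N) :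
    ∑ k ∈ range (j + 1), (-1 : ℤ) ^ k * ((n + k).choose k : ℤ) * ((N).choose (j - k) : ℤ) =
      ((N - (n + 1)).choose j : ℤ) := by
  have hc : Commute (-(n + 1) : ℤ) ((N : ℤ)) := Commute.all _ _
  have hv := Ring.add_choose_eq (R := ℤ) (r := -(n + 1)) (s := (N : ℤ)) j hc
  have hsum : (-(n + 1) : ℤ) + N = ((N - (n + 1) : ℕ) : ℤ) := by
    have := Nat.cast_sub h (R := ℤ); omega
  rw [hsum, Ring.choose_natCast] at hv
  rw [hv, Finset.Nat.sum_antidiagonal_eq_sum_range_succ_mk]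
  refine Finset.sum_congr rfl fun k hk => ?_
  rw [ring_choose_neg, Ring.choose_natCast]

/-- The ballot number as a difference of binomial coefficients. -/
lemma ballot_int (n m k : ℕ) (hk : k ≤ m) :
    (((n + 2 * k + 1) * (n + 2 * m).choose (m - k) / (n + k + m + 1) : ℕ) : ℤ) =
      ((n + 2 * m).choose (m - k) : ℤ) - ((n + 2 * m).choose (n + m + k + 1) : ℤ) := by
  rcases eq_or_lt_of_le hk with rfl | hlt
  · rw [Nat.sub_self, Nat.choose_zero_right, mul_one,
      Nat.choose_eq_zero_of_lt (by omega), show n + k + k + 1 = n + 2 * k + 1 by ring,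
      Nat.div_self (by omega)]
    simp
  · have hsym : (n + 2 * m).choose (n + m + k + 1) = (n + 2 * m).choose (m - k - 1) := by
      rw [show n + m + k + 1 = (n + 2 * m) - (m - k - 1) by omega]
      exact Nat.choose_symm (by omega)
    have hle : (n + 2 * m).choose (m - k - 1) ≤ (n + 2 * m).choose (m - k) := by
      have h := Nat.choose_le_succ_of_lt_half_left
        (r := m - k - 1) (n := n + 2 * m) (by omega)
      rwa [show m - k - 1 + 1 = m - k by omega] at h
    have hrec := Nat.choose_succ_right_eq (n + 2 * m) (m - k - 1)
    rw [show m - k - 1 + 1 = m - k by omega,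
      show n + 2 * m - (m - k - 1) = n + m + k + 1 by omega] at hrec
    have hdiv : (n + 2 * k + 1) * (n + 2 * m).choose (m - k) / (n + k + m + 1) =
        (n + 2 * m).choose (m - k) - (n + 2 * m).choose (m - k - 1) := by
      apply Nat.div_eq_of_eq_mul_left (by omega)
      zify [hle, hk] at hrec ⊢
      linear_combination -hrec
    rw [hdiv, hsym]
    zify [hle]

/-- The binomial identity expressing `YX = Id`: for `m ≥ 1`,
`Σ_{k=0}^{m} (−1)^k C(n+k,k) · ((n+2k+1)/(n+k+m+1))·C(n+2m, m−k) = 0`,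
while for `m = 0` the sum equals `1`. -/
theorem ballot_alternating_sum (n m : ℕ) :
    (∑ k ∈ Finset.range (m + 1),
        (-1 : ℤ) ^ k * (Nat.choose (n + k) k : ℤ) *
          (((n + 2 * k + 1) * Nat.choose (n + 2 * m) (m - k) / (n + k + m + 1) : ℕ) : ℤ)) =
      if m = 0 then 1 else 0 := by
  rcases Nat.eq_zero_or_pos m with rfl | hm
  · rw [if_pos rfl, Finset.sum_range_one]
    simp [Nat.div_self (Nat.succ_pos n)]
  · rw [if_neg hm.ne']
    have hrw : ∑ k ∈ Finset.range (m + 1),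
        (-1 : ℤ) ^ k * ((n + k).choose k : ℤ) *
          (((n + 2 * k + 1) * (n + 2 * m).choose (m - k) / (n + k + m + 1) : ℕ) : ℤ) =
        ∑ k ∈ Finset.range (m + 1),
          ((-1 : ℤ) ^ k * ((n + k).choose k : ℤ) * ((n + 2 * m).choose (m - k) : ℤ) -
           (-1 : ℤ) ^ k * ((n + k).choose k : ℤ) * ((n + 2 * m).choose (n + m + k + 1) : ℤ)) := by
      refine Finset.sum_congr rfl fun k hk => ?_
      rw [ballot_int n m k (Finset.mem_range_succ_iff.mp hk)]
      ring
    rw [hrw, Finset.sum_sub_distrib]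
    have hA := vandermonde_neg n (n + 2 * m) m (by omega)
    have hB : ∑ k ∈ Finset.range (m + 1),
        (-1 : ℤ) ^ k * ((n + k).choose k : ℤ) * ((n + 2 * m).choose (n + m + k + 1) : ℤ) =
        (((n + 2 * m) - (n + 1)).choose (m - 1) : ℤ) := by
      rw [Finset.sum_range_succ,
        Nat.choose_eq_zero_of_lt (show n + 2 * m < n + m + m + 1 by omega)]
      have h2 : ∑ k ∈ Finset.range m,
          (-1 : ℤ) ^ k * ((n + k).choose k : ℤ) * ((n + 2 * m).choose (n + m + k + 1) : ℤ) =
          ∑ k ∈ Finset.range ((m - 1) + 1),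
            (-1 : ℤ) ^ k * ((n + k).choose k : ℤ) * ((n + 2 * m).choose ((m - 1) - k) : ℤ) := by
        rw [show (m - 1) + 1 = m by omega]
        refine Finset.sum_congr rfl fun k hk => ?_
        have hk' : k < m := Finset.mem_range.mp hk
        rw [show n + m + k + 1 = (n + 2 * m) - ((m - 1) - k) by omega,
          Nat.choose_symm (by omega)]
      simp only [Nat.cast_zero, mul_zero, add_zero]
      rw [h2, vandermonde_neg n (n + 2 * m) (m - 1) (by omega)]
    rw [hA, hB, show n + 2 * m - (n + 1) = 2 * (m - 1) + 1 by omega]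
    have hs := Nat.choose_symm_half (m - 1)
    rw [show m - 1 + 1 = m by omega] at hs
    rw [hs]
    ring
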